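/- Let α be a positive irrational real number and β any real number, and set θ = 1/α and γ = −β/α. Then there exists N₀ such that for every integer N ≥ N₀, the number of positive integers n with ⌊nα + β⌋ = N equals ⌊(N+1)θ + γ⌋ − ⌊Nθ + γ⌋. -/

import Mathlib

/-- The number of positive integers `n` with `⌊n·α + β⌋ = N`, i.e. the multiplicity
of `N` in the Beatty sequence `S(α,β)`. -/
noncomputable def beattyCount (α β : ℝ) (N : ℤ) : ℕ :=
  Nat.card {n : ℕ // 0 < n ∧ ⌊(n : ℝ) * α + β⌋ = N}

theorem beatty_count_eq_floor_diff (α β : ℝ) (hα : 0 < α) (hirr : Irrational α) :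
    ∃ N₀ : ℤ, ∀ N : ℤ, N ≥ N₀ →
      (beattyCount α β N : ℤ) =
        ⌊((N : ℝ) + 1) * (1 / α) + (-β / α)⌋ - ⌊(N : ℝ) * (1 / α) + (-β / α)⌋ := by
  have hnoint : ∃ N₀ : ℤ, (α + β ≤ (N₀ : ℝ)) ∧
      ∀ N : ℤ, N ≥ N₀ → ∀ m : ℤ, (N : ℝ) - β ≠ (m : ℝ) * α := by
    by_cases h : ∃ N₁ m₁ : ℤ, (N₁ : ℝ) - β = (m₁ : ℝ) * α
    · obtain ⟨N₁, m₁, h1⟩ := h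
      refine ⟨max (N₁ + 1) ⌈α + β⌉, ?_, ?_⟩
      · calc α + β ≤ (⌈α + β⌉ : ℝ) := Int.le_ceil _
          _ ≤ ((max (N₁ + 1) ⌈α + β⌉ : ℤ) : ℝ) := by exact_mod_cast le_max_right _ _
      · intro N hN m hm
        have hNN : N₁ < N := lt_of_lt_of_le (by omega) (le_trans (le_max_left _ _) hN)
        have hdiff : ((N : ℝ) - N₁) = ((m : ℝ) - m₁) * α := by
          have := sub_eq_sub_iff_sub_eq_sub.mp (congrArg₂ Sub.sub hm h1)
          linarith [hm, h1]
        have hmm : m ≠ m₁ := by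
          intro hEq
          rw [hEq, sub_self, zero_mul] at hdiff
          have : (N : ℝ) = (N₁ : ℝ) := by linarith
          exact absurd (by exact_mod_cast this) (by omega)
        have hne : ((m - m₁ : ℤ) : ℝ) ≠ 0 := by
          exact_mod_cast sub_ne_zero.mpr hmm
        have : α = ((N - N₁ : ℤ) : ℝ) / ((m - m₁ : ℤ) : ℝ) := by
          rw [eq_div_iff hne]
          push_cast
          linarith [hdiff]
        exact hirr ⟨((N - N₁ : ℤ) : ℚ) / ((m - m₁ : ℤ) : ℚ), by push_cast [this]; ring⟩
    · refine ⟨⌈α + β⌉, Int.le_ceil _, fun N _ m hm => h ⟨N, m, hm⟩⟩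
  obtain ⟨N₀, hN₀β, hN₀⟩ := hnoint
  refine ⟨N₀, fun N hN => ?_⟩
  have hβ : α + β ≤ (N : ℝ) := le_trans hN₀β (by exact_mod_cast hN)
  have h1 : ∀ m : ℤ, (N : ℝ) - β ≠ (m : ℝ) * α := hN₀ N hN
  have h2 : ∀ m : ℤ, (N : ℝ) + 1 - β ≠ (m : ℝ) * α := by
    intro m hm
    exact hN₀ (N + 1) (by omega) m (by push_cast; linarith)
  set r1 : ℝ := (N : ℝ) * (1 / α) + (-β / α) with hr1
  set r2 : ℝ := ((N : ℝ) + 1) * (1 / α) + (-β / α) with hr2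
  have hαne : α ≠ 0 := ne_of_gt hα
  have hr1' : r1 = ((N : ℝ) - β) / α := by rw [hr1]; field_simp; ring
  have hr2' : r2 = ((N : ℝ) + 1 - β) / α := by rw [hr2]; field_simp; ring
  set A : ℤ := ⌊r1⌋ with hA
  set B : ℤ := ⌊r2⌋ with hB
  have hA1 : 1 ≤ A := by
    rw [hA]
    refine Int.le_floor.mpr ?_
    rw [hr1']
    rw [le_div_iff₀ hα]
    push_cast
    linarith
  have hAB : A ≤ B := Int.floor_le_floor (by rw [hr1', hr2']; gcongr; linarith)
  -- membership characterization
  have mem : ∀ n : ℕ, (0 < n ∧ ⌊(n : ℝ) * α + β⌋ = N) ↔ (A < (n : ℤ) ∧ (n : ℤ) ≤ B) := by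
    intro n
    constructor
    · rintro ⟨-, hfl⟩
      rw [Int.floor_eq_iff] at hfl
      obtain ⟨hl, hu⟩ := hfl
      constructor
      · rw [hA, Int.floor_lt, hr1', div_lt_iff₀ hα]
        have hne : (N : ℝ) - β ≠ (n : ℝ) * α := by
          have := h1 (n : ℤ); push_cast at this ⊢; exact this
        push_cast
        rcases lt_or_eq_of_le (by linarith : (N : ℝ) - β ≤ (n : ℝ) * α) with h | h
        · exact h
        · exact absurd h hne
      · rw [hB, Int.le_floor, hr2', le_div_iff₀ hα]
        push_cast
        linarith
    · rintro ⟨hl, hu⟩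
      have hl' : r1 < (n : ℝ) := by
        have := Int.floor_lt.mp hl
        exact_mod_cast this
      have hu' : (n : ℝ) ≤ r2 := by
        have := Int.le_floor.mp hu
        exact_mod_cast this
      rw [hr1', div_lt_iff₀ hα] at hl'
      rw [hr2', le_div_iff₀ hα] at hu'
      have hu'' : (n : ℝ) * α < (N : ℝ) + 1 - β := by
        rcases lt_or_eq_of_le hu' with h | h
        · exact h
        · exact absurd h.symm (by have := h2 (n : ℤ); push_cast at this ⊢; exact this)
      constructor
      · have : (1 : ℤ) < (n : ℤ) := lt_of_le_of_lt hA1 hl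
        exact_mod_cast lt_trans (by norm_num : (0:ℤ) < 1) this
      · rw [Int.floor_eq_iff]
        constructor <;> push_cast <;> linarith
  -- equivalence with Set.Ioc A B
  have hcard : beattyCount α β N = Nat.card (Set.Ioc A B) := by
    apply Nat.card_congr
    refine ⟨fun n => ⟨(n.1 : ℤ), Set.mem_Ioc.mpr ((mem n.1).mp n.2)⟩,
      fun z => ⟨z.1.toNat, ?_⟩, ?_, ?_⟩
    · have hz := Set.mem_Ioc.mp z.2
      have hzpos : 0 < z.1 := lt_of_le_of_lt hA1 hz.1 |>.trans_le (le_refl _) |> (fun h => lt_of_lt_of_le (by omega : (0:ℤ) < z.1) (le_refl _))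
      have hznat : ((z.1.toNat : ℕ) : ℤ) = z.1 := Int.toNat_of_nonneg (by omega)
      refine (mem z.1.toNat).mpr ?_
      rw [hznat]
      exact hz
    · intro n
      ext
      simp [Int.toNat_natCast]
    · intro z
      have hz := Set.mem_Ioc.mp z.2
      have hznat : ((z.1.toNat : ℕ) : ℤ) = z.1 := Int.toNat_of_nonneg (by omega)
      ext
      exact hznat
  rw [hcard]
  rw [Nat.card_coe_set_eq, ← Finset.coe_Ioc, Set.ncard_coe_finset, Int.card_Ioc]
  rw [Int.toNat_of_nonneg (by omega)]
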